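/- Let μ, τ be real numbers and σ > 0. The supremum of E[(τ − X)₊] over all real-valued random variables X (equivalently, Borel probability measures on ℝ) satisfying E[X] = μ and E[X²] = σ² + μ² equals ( (τ − μ) + √(σ² + (μ − τ)²) ) / 2. -/

import Mathlib

open MeasureTheory ProbabilityTheory

lemma dirac_integrable {g : ℝ → ℝ} (hg : Measurable g) (a : ℝ) :
    Integrable g (Measure.dirac a) := by
  refine ⟨hg.aestronglyMeasurable, ?_⟩
  simp [HasFiniteIntegral, lintegral_dirac]

theorem stmt_14 (μ τ σ : ℝ) (hσ : 0 < σ) :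
    sSup {p : ℝ | ∃ m : Measure ℝ, IsProbabilityMeasure m ∧
        Integrable (fun x : ℝ => x) m ∧ Integrable (fun x : ℝ => x ^ 2) m ∧
        (∫ x, x ∂m) = μ ∧ (∫ x, x ^ 2 ∂m) = σ ^ 2 + μ ^ 2 ∧
        p = ∫ x, max (τ - x) 0 ∂m} =
      ((τ - μ) + Real.sqrt (σ ^ 2 + (μ - τ) ^ 2)) / 2 := by
  have hσ2 : (0:ℝ) < σ ^ 2 + (μ - τ) ^ 2 := by positivity
  set s := Real.sqrt (σ ^ 2 + (μ - τ) ^ 2) with hsdef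
  have hs2 : s ^ 2 = σ ^ 2 + (μ - τ) ^ 2 := Real.sq_sqrt hσ2.le
  have hspos : 0 < s := Real.sqrt_pos.2 hσ2
  set d : ℝ := τ - μ with hd
  have hds : |d| < s := by
    rw [← Real.sqrt_sq_eq_abs, hsdef]
    apply Real.sqrt_lt_sqrt (sq_nonneg d)
    have : d ^ 2 = (μ - τ) ^ 2 := by rw [hd]; ring
    nlinarith
  have hds1 : -s < d := (abs_lt.1 hds).1
  have hds2 : d < s := (abs_lt.1 hds).2
  apply IsGreatest.csSup_eq
  constructor
  · -- membership: two-point distribution at τ - s and τ + s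
    set p : ℝ := (s + d) / (2 * s) with hpdef
    set q : ℝ := (s - d) / (2 * s) with hqdef
    have hp0 : 0 ≤ p := div_nonneg (by linarith) (by linarith)
    have hq0 : 0 ≤ q := div_nonneg (by linarith) (by linarith)
    set m : Measure ℝ := ENNReal.ofReal p • Measure.dirac (τ - s)
        + ENNReal.ofReal q • Measure.dirac (τ + s) with hmdef
    have key : ∀ g : ℝ → ℝ, Measurable g →
        Integrable g m ∧ (∫ x, g x ∂m) = p * g (τ - s) + q * g (τ + s) := by
      intro g hg
      have h1 : Integrable g (ENNReal.ofReal p • Measure.dirac (τ - s)) :=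
        (dirac_integrable hg _).smul_measure ENNReal.ofReal_ne_top
      have h2 : Integrable g (ENNReal.ofReal q • Measure.dirac (τ + s)) :=
        (dirac_integrable hg _).smul_measure ENNReal.ofReal_ne_top
      refine ⟨h1.add_measure h2, ?_⟩
      rw [hmdef, integral_add_measure h1 h2, integral_smul_measure, integral_smul_measure,
        integral_dirac, integral_dirac, ENNReal.toReal_ofReal hp0, ENNReal.toReal_ofReal hq0]
      simp [smul_eq_mul]
    have hprob : IsProbabilityMeasure m := by
      constructor
      rw [hmdef]
      simp only [Measure.add_apply, Measure.smul_apply, Measure.dirac_apply' _ MeasurableSet.univ,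
        Set.mem_univ, Set.indicator_of_mem, Pi.one_apply, smul_eq_mul, mul_one]
      rw [← ENNReal.ofReal_add hp0 hq0]
      have : p + q = 1 := by
        rw [hpdef, hqdef]; field_simp; ring
      rw [this, ENNReal.ofReal_one]
    obtain ⟨hi1, he1⟩ := key (fun x => x) measurable_id
    obtain ⟨hi2, he2⟩ := key (fun x => x ^ 2) (measurable_id.pow_const 2)
    obtain ⟨hi3, he3⟩ := key (fun x => max (τ - x) 0)
      ((measurable_const.sub measurable_id).max measurable_const)
    refine ⟨m, hprob, hi1, hi2, ?_, ?_, ?_⟩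
    · rw [he1]
      simp only [hpdef, hqdef, hd]
      field_simp
      ring
    · rw [he2]
      simp only [hpdef, hqdef, hd]
      field_simp
      linear_combination (2 * s) * hs2
    · rw [he3]
      have e1 : τ - (τ - s) = s := by ring
      have e2 : τ - (τ + s) = -s := by ring
      rw [e1, e2, max_eq_left hspos.le, max_eq_right (by linarith), mul_zero, add_zero,
        hpdef, hd]
      field_simp
      ring
  · rintro x ⟨m, hm, hint, hint2, hmean, hsec, rfl⟩
    -- upper bound via Cauchy-Schwarz (variance nonneg)
    have hg : Integrable (fun x : ℝ => τ - x) m := (integrable_const τ).sub hint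
    have hg2 : Integrable (fun x : ℝ => (τ - x) ^ 2) m := by
      have : (fun x : ℝ => (τ - x) ^ 2) = fun x => (τ ^ 2 - (2 * τ) * x) + x ^ 2 := by
        funext x; ring
      rw [this]
      exact ((integrable_const _).sub (hint.const_mul (2 * τ))).add hint2
    have hℒ : MemLp (fun x : ℝ => τ - x) 2 m :=
      (memLp_two_iff_integrable_sq hg.aestronglyMeasurable).2 hg2
    have habs : MemLp (fun x : ℝ => |τ - x|) 2 m := hℒ.abs
    have hIg : (∫ x, (τ - x) ∂m) = d := by
      rw [integral_sub (integrable_const τ) hint, hmean, integral_const]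
      simp [hd]
    have hIg2 : (∫ x, (τ - x) ^ 2 ∂m) = s ^ 2 := by
      have e : (fun x : ℝ => (τ - x) ^ 2) = fun x => (τ ^ 2 - 2 * τ * x) + x ^ 2 := by
        funext x; ring
      have i1 : Integrable (fun x : ℝ => τ ^ 2 - 2 * τ * x) m :=
        (integrable_const (τ ^ 2)).sub (hint.const_mul (2 * τ))
      rw [e, integral_add i1 hint2,
        integral_sub (integrable_const (τ ^ 2)) (hint.const_mul (2 * τ)),
        integral_const, integral_const_mul, hmean, hsec, hs2]
      simp
      ring
    have hvar := variance_nonneg (fun x : ℝ => |τ - x|) m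
    rw [variance_eq_sub habs] at hvar
    have habs2 : (∫ x, |τ - x| ^ 2 ∂m) = s ^ 2 := by
      rw [← hIg2]; congr 1; funext x; rw [sq_abs]
    have hEabs : (∫ x, |τ - x| ∂m) ≤ s := by
      have h1 : (∫ x, |τ - x| ∂m) ^ 2 ≤ s ^ 2 := by
        have h0 : m[(fun x : ℝ => |τ - x|) ^ 2] = s ^ 2 := by
          rw [← habs2]; rfl
        nlinarith [hvar]
      have h2 : 0 ≤ ∫ x, |τ - x| ∂m := integral_nonneg fun x => abs_nonneg _
      nlinarith
    have hmax : (fun x : ℝ => max (τ - x) 0) = fun x => ((τ - x) + |τ - x|) / 2 := by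
      funext x
      rcases le_total (τ - x) 0 with h | h
      · rw [max_eq_right h, abs_of_nonpos h]; ring
      · rw [max_eq_left h, abs_of_nonneg h]; ring
    rw [hmax, integral_div, integral_add hg hg.abs, hIg]
    have : (∫ x, |(fun x : ℝ => τ - x) x| ∂m) = ∫ x, |τ - x| ∂m := rfl
    rw [this]
    have hdd : d = τ - μ := hd
    linarith [hEabs]
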